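/- Let f and g be two probability densities on ℝ with finite moment generating functions at all s > 0. If there exists z* ∈ ℝ such that f(z) > g(z) for all z > z*, then there exists s* > 0 such that for all s > s*, log ∫ f(z) e^{sz} dz > log ∫ g(z) e^{sz} dz. -/

import Mathlib

open MeasureTheory Real

/-- Fat-tail comparison theorem: if the density `f` dominates `g` strictly beyond some
`z*`, then for all large enough `s` the cumulant function of `f` exceeds that of `g`. -/
theorem fatter_tail_larger_cumulant
    (f g : ℝ → ℝ) (hf0 : ∀ z, 0 ≤ f z) (hg0 : ∀ z, 0 ≤ g z)
    (hfi : Integrable f) (hgi : Integrable g)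
    (hf1 : ∫ z, f z = 1) (hg1 : ∫ z, g z = 1)
    (hfint : ∀ s : ℝ, 0 < s → Integrable (fun z => f z * Real.exp (s * z)))
    (hgint : ∀ s : ℝ, 0 < s → Integrable (fun z => g z * Real.exp (s * z)))
    (zs : ℝ) (htail : ∀ z, zs < z → g z < f z)
    (hpos : 0 < ∫ z in Set.Ioi zs, (f z - g z)) :
    ∃ ss : ℝ, 0 < ss ∧ ∀ s : ℝ, ss < s →
      Real.log (∫ z, g z * Real.exp (s * z))
        < Real.log (∫ z, f z * Real.exp (s * z)) := by
  set a : ℝ := zs + 1 with ha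
  have hhint : Integrable (fun z => f z - g z) := hfi.sub hgi
  -- c = tail mass beyond a is positive
  set c : ℝ := ∫ z in Set.Ioi a, (f z - g z) with hc
  have hcpos : 0 < c := by
    rw [hc, setIntegral_pos_iff_support_of_nonneg_ae]
    · have hsub : Set.Ioi a ⊆ Function.support (fun z => f z - g z) ∩ Set.Ioi a := by
        intro z hz
        refine ⟨sub_ne_zero.mpr (ne_of_gt (htail z ?_)), hz⟩
        have : a < z := hz
        linarith
      calc (0 : ENNReal) < volume (Set.Ioi a) := by simp
        _ ≤ _ := measure_mono hsub
    · filter_upwards [MeasureTheory.ae_restrict_mem measurableSet_Ioi] with z hz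
      have : zs < z := by have : a < z := hz; linarith
      simp only [Pi.zero_apply]
      linarith [htail z this]
    · exact hhint.integrableOn
  refine ⟨max 1 (Real.log (2 / c)), lt_max_of_lt_left one_pos, ?_⟩
  intro s hs
  have hs1 : 1 < s := lt_of_le_of_lt (le_max_left _ _) hs
  have hs0 : 0 < s := by linarith
  have hlogs : Real.log (2 / c) < s := lt_of_le_of_lt (le_max_right _ _) hs
  -- integrability of (f-g) * exp(s z)
  have hIfg : Integrable (fun z => (f z - g z) * Real.exp (s * z)) := by
    have h := (hfint s hs0).sub (hgint s hs0)
    exact h.congr (Filter.Eventually.of_forall fun z => by simp [sub_mul])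
  -- lower bound on Iic part
  have hA : -(2 * Real.exp (s * zs)) ≤ ∫ z in Set.Iic zs, (f z - g z) * Real.exp (s * z) := by
    have habs : |∫ z in Set.Iic zs, (f z - g z) * Real.exp (s * z)|
        ≤ ∫ z in Set.Iic zs, |(f z - g z) * Real.exp (s * z)| :=
      by simpa only [Real.norm_eq_abs] using
        MeasureTheory.norm_integral_le_integral_norm
          (fun z => (f z - g z) * Real.exp (s * z))
          (μ := volume.restrict (Set.Iic zs))
    have hmono : ∫ z in Set.Iic zs, |(f z - g z) * Real.exp (s * z)|
        ≤ ∫ z in Set.Iic zs, (f z + g z) * Real.exp (s * zs) := by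
      apply setIntegral_mono_on
      · exact hIfg.abs.integrableOn
      · exact ((hfi.add hgi).mul_const _).integrableOn
      · exact measurableSet_Iic
      · intro z hz
        have hz' : z ≤ zs := hz
        rw [abs_mul, abs_of_nonneg (Real.exp_nonneg _)]
        have h1 : |f z - g z| ≤ f z + g z :=
          abs_le.mpr ⟨by linarith [hf0 z, hg0 z], by linarith [hg0 z]⟩
        have h2 : Real.exp (s * z) ≤ Real.exp (s * zs) :=
          Real.exp_le_exp.mpr (by nlinarith)
        exact mul_le_mul h1 h2 (Real.exp_nonneg _) (by linarith [hf0 z, hg0 z])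
    have hle : ∫ z in Set.Iic zs, (f z + g z) * Real.exp (s * zs)
        ≤ ∫ z, (f z + g z) * Real.exp (s * zs) := by
      apply setIntegral_le_integral ((hfi.add hgi).mul_const _)
      filter_upwards with z
      simp only [Pi.zero_apply, Pi.add_apply]
      exact mul_nonneg (by linarith [hf0 z, hg0 z]) (Real.exp_nonneg _)
    have heq : ∫ z, (f z + g z) * Real.exp (s * zs) = 2 * Real.exp (s * zs) := by
      rw [integral_mul_const, integral_add hfi hgi, hf1, hg1]
      ring
    have := neg_abs_le (∫ z in Set.Iic zs, (f z - g z) * Real.exp (s * z))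
    linarith
  -- lower bound on Ioi part
  have hnnIoi : 0 ≤ᵐ[volume.restrict (Set.Ioi zs)]
      fun z => (f z - g z) * Real.exp (s * z) := by
    filter_upwards [MeasureTheory.ae_restrict_mem measurableSet_Ioi] with z hz
    have := htail z hz
    have := Real.exp_nonneg (s * z)
    simp only [Pi.zero_apply]
    nlinarith
  have hB1 : ∫ z in Set.Ioi a, (f z - g z) * Real.exp (s * z)
      ≤ ∫ z in Set.Ioi zs, (f z - g z) * Real.exp (s * z) := by
    apply setIntegral_mono_set hIfg.integrableOn hnnIoi
    exact (Set.Ioi_subset_Ioi (by linarith : zs ≤ a)).eventuallyLE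
  have hB2 : c * Real.exp (s * a) ≤ ∫ z in Set.Ioi a, (f z - g z) * Real.exp (s * z) := by
    have heq : c * Real.exp (s * a) = ∫ z in Set.Ioi a, (f z - g z) * Real.exp (s * a) := by
      rw [integral_mul_const]
    rw [heq]
    apply setIntegral_mono_on
    · exact (hhint.mul_const _).integrableOn
    · exact hIfg.integrableOn
    · exact measurableSet_Ioi
    · intro z hz
      have hz' : a < z := hz
      have hzz : zs < z := by linarith
      have h1 : 0 ≤ f z - g z := by linarith [htail z hzz]
      have h2 : Real.exp (s * a) ≤ Real.exp (s * z) :=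
        Real.exp_le_exp.mpr (by nlinarith)
      exact mul_le_mul_of_nonneg_left h2 h1
  -- combine
  have hsplit : (∫ z in Set.Iic zs, (f z - g z) * Real.exp (s * z))
      + (∫ z in Set.Ioi zs, (f z - g z) * Real.exp (s * z))
      = ∫ z, (f z - g z) * Real.exp (s * z) :=
    intervalIntegral.integral_Iic_add_Ioi hIfg.integrableOn hIfg.integrableOn
  have hkey : 0 < ∫ z, (f z - g z) * Real.exp (s * z) := by
    have h2c : 2 / c < Real.exp s := by
      rw [← Real.exp_log (by positivity : (0:ℝ) < 2 / c)]
      exact Real.exp_lt_exp.mpr hlogs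
    have h2 : 2 < c * Real.exp s := by
      rw [div_lt_iff₀ hcpos] at h2c
      linarith [mul_comm c (Real.exp s)]
    have hexpa : Real.exp (s * a) = Real.exp (s * zs) * Real.exp s := by
      rw [← Real.exp_add, ha]; ring_nf
    have hE : 0 < Real.exp (s * zs) := Real.exp_pos _
    have : 2 * Real.exp (s * zs) < c * Real.exp (s * a) := by
      rw [hexpa]
      calc 2 * Real.exp (s * zs) < (c * Real.exp s) * Real.exp (s * zs) := by
            apply mul_lt_mul_of_pos_right h2 hE
        _ = c * (Real.exp (s * zs) * Real.exp s) := by ring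
    linarith
  -- conclude
  have hsub : (∫ z, f z * Real.exp (s * z)) - (∫ z, g z * Real.exp (s * z))
      = ∫ z, (f z - g z) * Real.exp (s * z) := by
    rw [← integral_sub (hfint s hs0) (hgint s hs0)]
    congr 1; ext z; ring
  have hglt : (∫ z, g z * Real.exp (s * z)) < ∫ z, f z * Real.exp (s * z) := by linarith
  have hgpos : 0 < ∫ z, g z * Real.exp (s * z) := by
    rw [integral_pos_iff_support_of_nonneg_ae]
    · have h1 : 0 < ∫ z, g z := by rw [hg1]; norm_num
      rw [integral_pos_iff_support_of_nonneg_ae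
        (Filter.Eventually.of_forall hg0) hgi] at h1
      have hsupp : Function.support g ⊆
          Function.support (fun z => g z * Real.exp (s * z)) := by
        intro z hz
        simp only [Function.mem_support] at hz ⊢
        exact mul_ne_zero hz (Real.exp_ne_zero _)
      exact lt_of_lt_of_le h1 (measure_mono hsupp)
    · filter_upwards with z
      have := hg0 z
      positivity
    · exact hgint s hs0
  exact Real.log_lt_log hgpos hglt
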